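/- Let m be a positive integer with m ≡ 4 (mod 6). Then Φ(m×4,3,1) ≤ J(m×4,3,1) − 1, where J(m×4,3,1) = ⌊m(2m−1)/3⌋. -/

import Mathlib

/-- The cyclic shift of a codeword `B ⊆ I_m × Z_n` by `τ`. -/
def OOCshift {m n : ℕ} (B : Finset (Fin m × ZMod n)) (τ : ZMod n) :
    Finset (Fin m × ZMod n) :=
  B.image fun p => (p.1, p.2 + τ)

/-- A two-dimensional `(m × n, k, lam)` optical orthogonal code: a family of
`k`-element codewords of `I_m × Z_n` with auto- and cross-correlation at most `lam`. -/
def IsOOC (m n k lam : ℕ) (C : Finset (Finset (Fin m × ZMod n))) : Prop :=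
  (∀ A ∈ C, A.card = k) ∧
  (∀ A ∈ C, ∀ τ : ZMod n, τ ≠ 0 → (A ∩ OOCshift A τ).card ≤ lam) ∧
  (∀ A ∈ C, ∀ B ∈ C, A ≠ B → ∀ τ : ZMod n, (A ∩ OOCshift B τ).card ≤ lam)

namespace OOC3

variable {m : ℕ}

abbrev Pt (m : ℕ) := Fin m × ZMod 4

def shiftPt (τ : ZMod 4) (u : Pt m) : Pt m := (u.1, u.2 + τ)

lemma shiftPt_inj (τ : ZMod 4) : Function.Injective (shiftPt (m := m) τ) := by
  rintro ⟨a1, a2⟩ ⟨b1, b2⟩ h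
  simp only [shiftPt, Prod.mk.injEq] at h
  obtain ⟨h1, h2⟩ := h
  simp [h1, add_left_cancel (by rw [add_comm, h2, add_comm] : τ + a2 = τ + b2)]

lemma mem_OOCshift {S : Finset (Pt m)} {τ : ZMod 4} {u : Pt m} :
    u ∈ OOCshift S τ ↔ (u.1, u.2 - τ) ∈ S := by
  simp only [OOCshift, Finset.mem_image]
  constructor
  · rintro ⟨a, ha, rfl⟩; simpa using ha
  · intro hu; exact ⟨_, hu, by simp⟩

lemma OOCshift_eq_image (S : Finset (Pt m)) (τ : ZMod 4) :
    OOCshift S τ = S.image (shiftPt τ) := rfl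

def shiftDart (τ : ZMod 4) (p : Pt m × Pt m) : Pt m × Pt m :=
  (shiftPt τ p.1, shiftPt τ p.2)

lemma shiftDart_inj (τ : ZMod 4) : Function.Injective (shiftDart (m := m) τ) := by
  rintro ⟨a, b⟩ ⟨c, d⟩ h
  simp only [shiftDart, Prod.mk.injEq] at h
  exact Prod.ext (shiftPt_inj τ h.1) (shiftPt_inj τ h.2)

end OOC3
namespace OOC3

variable {m : ℕ}

/-- ordered pairs of distinct elements -/
def darts (S : Finset (Pt m)) : Finset (Pt m × Pt m) :=
  (S ×ˢ S).filter fun p => p.1 ≠ p.2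

lemma mem_darts {S : Finset (Pt m)} {p : Pt m × Pt m} :
    p ∈ darts S ↔ p.1 ∈ S ∧ p.2 ∈ S ∧ p.1 ≠ p.2 := by
  simp [darts, Finset.mem_filter, Finset.mem_product, and_assoc]

lemma card_darts {S : Finset (Pt m)} (hS : S.card = 3) : (darts S).card = 6 := by
  classical
  have h1 : (S ×ˢ S).filter (fun p => p.1 = p.2) = S.image (fun a => (a, a)) := by
    ext ⟨a, b⟩
    simp only [Finset.mem_filter, Finset.mem_product, Finset.mem_image, Prod.mk.injEq]
    constructor
    · rintro ⟨⟨ha, hb⟩, rfl⟩; exact ⟨a, ha, rfl, rfl⟩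
    · rintro ⟨x, hx, rfl, rfl⟩; exact ⟨⟨hx, hx⟩, rfl⟩
  have h2 : ((S ×ˢ S).filter (fun p => p.1 = p.2)).card = 3 := by
    rw [h1, Finset.card_image_of_injective _ (fun a b h => (Prod.mk.injEq _ _ _ _).mp h |>.1), hS]
  have h3 := Finset.card_filter_add_card_filter_not
    (s := S ×ˢ S) (p := fun p => p.1 = p.2)
  have h4 : (S ×ˢ S).card = 9 := by rw [Finset.card_product, hS]
  have h5 : (darts S).card = ((S ×ˢ S).filter (fun p => ¬ p.1 = p.2)).card := rfl
  omega

def good (p : Pt m × Pt m) : Prop :=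
  p.1 ≠ p.2 ∧ ¬(p.1.1 = p.2.1 ∧ p.2.2 - p.1.2 = 2)

instance : DecidablePred (good (m := m)) := fun _ => by unfold good; infer_instance

def D (m : ℕ) : Finset (Pt m × Pt m) := Finset.univ.filter good

def oddp (p : Pt m × Pt m) : Prop := (p.2.2 - p.1.2).val % 2 = 1

instance : DecidablePred (oddp (m := m)) := fun _ => by unfold oddp; infer_instance

lemma oddp_good {p : Pt m × Pt m} (h : oddp p) : good p := by
  obtain ⟨⟨i, x⟩, ⟨j, y⟩⟩ := p
  unfold oddp at h
  unfold good
  constructor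
  · intro he
    rw [Prod.mk.injEq] at he
    rw [he.2] at h
    simp at h
  · rintro ⟨-, h2⟩
    rw [h2] at h
    exact absurd h (by decide)

def oddD (m : ℕ) : Finset (Pt m × Pt m) := Finset.univ.filter oddp

end OOC3
namespace OOC3

variable {m : ℕ}

lemma card_Pt : Fintype.card (Pt m) = 4 * m := by
  simp [Fintype.card_prod, ZMod.card, mul_comm]

lemma ne_self_add_two (x : ZMod 4) : x ≠ x + 2 := by
  intro h; nth_rewrite 1 [← add_zero x] at h
  exact (by decide : (2:ZMod 4) ≠ 0) (add_left_cancel h).symm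

lemma not_good_iff {u w : Pt m} : ¬ good (u, w) ↔ (w = u ∨ w = (u.1, u.2 + 2)) := by
  unfold good
  push_neg
  constructor
  · intro hc
    by_cases he : u = w
    · exact Or.inl he.symm
    · obtain ⟨h1, h2⟩ := hc he
      right
      refine Prod.ext h1.symm ?_
      rw [sub_eq_iff_eq_add'] at h2
      exact h2
  · rintro (rfl | rfl)
    · intro hne; exact absurd rfl hne
    · intro _; exact ⟨rfl, by simp⟩

lemma card_not_good :
    (Finset.univ.filter fun p : Pt m × Pt m => ¬ good p).card = 8 * m := by
  classical
  have himg : (Finset.univ.filter fun p : Pt m × Pt m => ¬ good p)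
      = (Finset.univ : Finset (Pt m × Bool)).image
        (fun q => (q.1, if q.2 then (q.1.1, q.1.2 + 2) else q.1)) := by
    ext ⟨u, w⟩
    simp only [Finset.mem_filter, Finset.mem_univ, true_and, Finset.mem_image]
    rw [not_good_iff]
    constructor
    · rintro (h | h)
      · exact ⟨(u, false), by simp [h]⟩
      · exact ⟨(u, true), by simp [h]⟩
    · rintro ⟨⟨v, b⟩, h⟩
      simp only [Prod.mk.injEq] at h
      obtain ⟨h1, h2⟩ := h
      subst h1
      cases b
      · rw [if_neg (by decide)] at h2; exact Or.inl h2.symm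
      · rw [if_pos (by decide)] at h2; exact Or.inr h2.symm
  have hinj : Function.Injective
      (fun q : Pt m × Bool => (q.1, if q.2 then (q.1.1, q.1.2 + 2) else q.1)) := by
    rintro ⟨v, b⟩ ⟨v', b'⟩ h
    simp only [Prod.mk.injEq] at h
    obtain ⟨h1, h2⟩ := h
    subst h1
    cases b <;> cases b'
    · rfl
    · rw [if_neg (by decide), if_pos (by decide)] at h2
      have h3 := congrArg Prod.snd h2
      dsimp at h3
      exact absurd h3 (ne_self_add_two v.2)
    · rw [if_pos (by decide), if_neg (by decide)] at h2
      have h3 := (congrArg Prod.snd h2).symm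
      dsimp at h3
      exact absurd h3 (ne_self_add_two v.2)
    · rfl
  rw [himg, Finset.card_image_of_injective _ hinj, Finset.card_univ, Fintype.card_prod,
    card_Pt, Fintype.card_bool]
  ring

lemma card_D_add : (D m).card + 8 * m = 16 * m^2 := by
  classical
  have h := Finset.card_filter_add_card_filter_not
    (s := (Finset.univ : Finset (Pt m × Pt m))) (p := good)
  rw [card_not_good] at h
  rw [Finset.card_univ, Fintype.card_prod, card_Pt] at h
  rw [show (4*m*(4*m)) = 16*m^2 by ring] at h
  exact h

lemma oddp_iff {u w : Pt m} : oddp (u, w) ↔ (w.2 = u.2 + 1 ∨ w.2 = u.2 + 3) := by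
  unfold oddp
  have h : ∀ d : ZMod 4, d.val % 2 = 1 ↔ (d = 1 ∨ d = 3) := by decide
  rw [h]
  rw [sub_eq_iff_eq_add', sub_eq_iff_eq_add']

lemma card_oddD : (oddD m).card = 8 * m^2 := by
  classical
  have himg : oddD m
      = (Finset.univ : Finset (Pt m × (Fin m × Bool))).image
        (fun q => (q.1, (q.2.1, q.1.2 + if q.2.2 then 1 else 3))) := by
    ext ⟨u, w⟩
    simp only [oddD, Finset.mem_filter, Finset.mem_univ, true_and, Finset.mem_image]
    rw [oddp_iff]
    constructor
    · rintro (h | h)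
      · exact ⟨(u, (w.1, true)), by simp [← h]⟩
      · exact ⟨(u, (w.1, false)), by simp [← h]⟩
    · rintro ⟨⟨v, j, b⟩, h⟩
      simp only [Prod.mk.injEq] at h
      obtain ⟨h1, h2⟩ := h
      subst h1
      have h3 := congrArg Prod.snd h2
      cases b
      · rw [if_neg (by decide)] at h3; exact Or.inr h3.symm
      · rw [if_pos (by decide)] at h3; exact Or.inl h3.symm
  have hinj : Function.Injective
      (fun q : Pt m × (Fin m × Bool) => (q.1, (q.2.1, q.1.2 + if q.2.2 then 1 else 3))) := by
    rintro ⟨v, j, b⟩ ⟨v', j', b'⟩ h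
    simp only [Prod.mk.injEq] at h
    obtain ⟨h1, h2, h3⟩ := h
    subst h1; subst h2
    have h4 := add_left_cancel h3
    have hbb : ∀ b b' : Bool, ((if b then (1:ZMod 4) else 3) = (if b' then 1 else 3)) → b = b' := by
      decide
    rw [hbb b b' h4]
  rw [himg, Finset.card_image_of_injective _ hinj, Finset.card_univ]
  simp [Fintype.card_prod, ZMod.card]
  ring

end OOC3
namespace OOC3

variable {m : ℕ}

lemma two_le_of_mem_mem {α : Type*} [DecidableEq α] {S : Finset α} {u v : α}
    (h : u ≠ v) (hu : u ∈ S) (hv : v ∈ S) : 2 ≤ S.card :=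
  Finset.one_lt_card.mpr ⟨u, hu, v, hv, h⟩

lemma sub_two_eq_add_two (x : ZMod 4) : x - 2 = x + 2 := by revert x; decide

lemma codeword_good {C : Finset (Finset (Pt m))} (hOOC : IsOOC m 4 3 1 C)
    {A : Finset (Pt m)} (hA : A ∈ C) {u v : Pt m} (hu : u ∈ A) (hv : v ∈ A)
    (hne : u ≠ v) : good (u, v) := by
  refine ⟨hne, ?_⟩
  rintro ⟨h1, h2⟩
  have hv' : v = (u.1, u.2 + 2) := Prod.ext h1.symm (by rwa [← sub_eq_iff_eq_add'])
  have hu2 : u ∈ OOCshift A 2 := by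
    rw [mem_OOCshift, sub_two_eq_add_two, ← hv']
    exact hv
  have hv2 : v ∈ OOCshift A 2 := by
    rw [mem_OOCshift, sub_two_eq_add_two, hv']
    dsimp only
    rw [add_assoc, show (2:ZMod 4) + 2 = 0 from by decide, add_zero]
    exact hu
  have hcard : 2 ≤ (A ∩ OOCshift A 2).card :=
    two_le_of_mem_mem hne (Finset.mem_inter.2 ⟨hu, hu2⟩) (Finset.mem_inter.2 ⟨hv, hv2⟩)
  have := hOOC.2.1 A hA 2 (by decide)
  omega

lemma mem_OOCshift' {S : Finset (Pt m)} {τ : ZMod 4} {u : Pt m} (hu : u ∈ OOCshift S τ) :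
    (u.1, u.2 - τ) ∈ S := mem_OOCshift.1 hu

lemma darts_shift_subset_D {C : Finset (Finset (Pt m))} (hOOC : IsOOC m 4 3 1 C)
    {A : Finset (Pt m)} (hA : A ∈ C) (τ : ZMod 4) :
    darts (OOCshift A τ) ⊆ D m := by
  intro p hp
  rw [mem_darts] at hp
  obtain ⟨h1, h2, h3⟩ := hp
  have hu := mem_OOCshift'  h1
  have hv := mem_OOCshift'  h2
  have hne : (p.1.1, p.1.2 - τ) ≠ (p.2.1, p.2.2 - τ) := by
    intro hc
    rw [Prod.mk.injEq] at hc
    exact h3 (Prod.ext hc.1 (by have := hc.2; rwa [sub_left_inj] at this))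
  have hg := codeword_good hOOC hA hu hv hne
  rw [D, Finset.mem_filter]
  refine ⟨Finset.mem_univ _, h3, ?_⟩
  rintro ⟨hr, hd⟩
  apply hg.2
  refine ⟨hr, ?_⟩
  dsimp only
  rw [sub_sub_sub_cancel_right]
  exact hd

lemma darts_shift_disjoint {C : Finset (Finset (Pt m))} (hOOC : IsOOC m 4 3 1 C)
    {A B : Finset (Pt m)} {τ σ : ZMod 4} (hA : A ∈ C) (hB : B ∈ C)
    (hne : (A, τ) ≠ (B, σ)) :
    Disjoint (darts (OOCshift A τ)) (darts (OOCshift B σ)) := by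
  rw [Finset.disjoint_left]
  intro p hp1 hp2
  rw [mem_darts] at hp1 hp2
  obtain ⟨ha1, ha2, had⟩ := hp1
  obtain ⟨hb1, hb2, -⟩ := hp2
  have huA : (p.1.1, p.1.2 - τ) ∈ A := mem_OOCshift' ha1
  have hvA : (p.2.1, p.2.2 - τ) ∈ A := mem_OOCshift' ha2
  have huB : (p.1.1, p.1.2 - τ) ∈ OOCshift B (σ - τ) := by
    rw [mem_OOCshift]
    dsimp only
    rw [show p.1.2 - τ - (σ - τ) = p.1.2 - σ from by ring]
    exact mem_OOCshift' hb1
  have hvB : (p.2.1, p.2.2 - τ) ∈ OOCshift B (σ - τ) := by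
    rw [mem_OOCshift]
    dsimp only
    rw [show p.2.2 - τ - (σ - τ) = p.2.2 - σ from by ring]
    exact mem_OOCshift' hb2
  have hne' : (p.1.1, p.1.2 - τ) ≠ (p.2.1, p.2.2 - τ) := by
    intro hc
    rw [Prod.mk.injEq] at hc
    exact had (Prod.ext hc.1 (by have := hc.2; rwa [sub_left_inj] at this))
  have hcard : 2 ≤ (A ∩ OOCshift B (σ - τ)).card :=
    two_le_of_mem_mem hne' (Finset.mem_inter.2 ⟨huA, huB⟩) (Finset.mem_inter.2 ⟨hvA, hvB⟩)
  by_cases hAB : A = B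
  · subst hAB
    have hts : τ ≠ σ := by
      intro hc; exact hne (by rw [hc])
    have := hOOC.2.1 A hA (σ - τ) (sub_ne_zero.2 (Ne.symm hts))
    omega
  · have := hOOC.2.2 A hA B hB hAB (σ - τ)
    omega

def cov (C : Finset (Finset (Pt m))) : Finset (Pt m × Pt m) :=
  (C ×ˢ (Finset.univ : Finset (ZMod 4))).biUnion fun q => darts (OOCshift q.1 q.2)

lemma cov_subset_D {C : Finset (Finset (Pt m))} (hOOC : IsOOC m 4 3 1 C) :
    cov C ⊆ D m := by
  intro p hp
  rw [cov, Finset.mem_biUnion] at hp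
  obtain ⟨q, hq, hpq⟩ := hp
  rw [Finset.mem_product] at hq
  exact darts_shift_subset_D hOOC hq.1 q.2 hpq

lemma mem_cov {C : Finset (Finset (Pt m))} {p : Pt m × Pt m} :
    p ∈ cov C ↔ ∃ A ∈ C, ∃ τ : ZMod 4, p ∈ darts (OOCshift A τ) := by
  rw [cov, Finset.mem_biUnion]
  constructor
  · rintro ⟨q, hq, hpq⟩
    rw [Finset.mem_product] at hq
    exact ⟨q.1, hq.1, q.2, hpq⟩
  · rintro ⟨A, hA, τ, hp⟩
    exact ⟨(A, τ), Finset.mem_product.2 ⟨hA, Finset.mem_univ _⟩, hp⟩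

lemma card_cov {C : Finset (Finset (Pt m))} (hOOC : IsOOC m 4 3 1 C) :
    (cov C).card = 24 * C.card := by
  rw [cov, Finset.card_biUnion]
  · have hconst : ∀ q ∈ C ×ˢ (Finset.univ : Finset (ZMod 4)),
        (darts (OOCshift q.1 q.2)).card = 6 := by
      intro q hq
      rw [Finset.mem_product] at hq
      apply card_darts
      rw [OOCshift_eq_image, Finset.card_image_of_injective _ (shiftPt_inj q.2)]
      exact hOOC.1 q.1 hq.1
    rw [Finset.sum_congr rfl hconst, Finset.sum_const, Finset.card_product, Finset.card_univ]
    simp [ZMod.card]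
    ring
  · rintro ⟨A, τ⟩ hq ⟨B, σ⟩ hq' hne
    rw [Finset.mem_coe, Finset.mem_product] at hq hq'
    exact darts_shift_disjoint hOOC hq.1 hq'.1 hne

end OOC3
namespace OOC3

variable {m : ℕ}

lemma shiftDart_comp (τ σ : ZMod 4) (p : Pt m × Pt m) :
    shiftDart τ (shiftDart σ p) = shiftDart (σ + τ) p := by
  simp [shiftDart, shiftPt, add_assoc]

lemma shiftDart_zero (p : Pt m × Pt m) : shiftDart 0 p = p := by
  simp [shiftDart, shiftPt]

lemma good_shift {τ : ZMod 4} {p : Pt m × Pt m} : good (shiftDart τ p) ↔ good p := by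
  unfold good shiftDart shiftPt
  dsimp only
  constructor
  · rintro ⟨h1, h2⟩
    refine ⟨fun hc => h1 (by rw [hc]), fun hc => h2 ⟨hc.1, ?_⟩⟩
    rw [add_sub_add_right_eq_sub]
    exact hc.2
  · rintro ⟨h1, h2⟩
    constructor
    · intro hc
      simp only [Prod.mk.injEq] at hc
      apply h1
      exact Prod.ext hc.1 (by have := hc.2; rwa [add_left_inj] at this)
    · intro hc
      apply h2
      refine ⟨hc.1, ?_⟩
      have := hc.2
      rwa [add_sub_add_right_eq_sub] at this

lemma oddp_shift {τ : ZMod 4} {p : Pt m × Pt m} : oddp (shiftDart τ p) ↔ oddp p := by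
  unfold oddp shiftDart shiftPt
  dsimp only
  rw [add_sub_add_right_eq_sub]

def dswap (p : Pt m × Pt m) : Pt m × Pt m := (p.2, p.1)

lemma good_swap {p : Pt m × Pt m} (h : good p) : good (dswap p) := by
  obtain ⟨h1, h2⟩ := h
  constructor
  · intro hc
    simp only [dswap, Prod.mk.injEq] at hc
    exact h1 hc.symm
  · rintro ⟨hr, hd⟩
    apply h2
    refine ⟨hr.symm, ?_⟩
    have key : ∀ a b : ZMod 4, a - b = 2 → b - a = 2 := by decide
    exact key _ _ hd

lemma darts_shift_eq (S : Finset (Pt m)) (τ : ZMod 4) :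
    darts (OOCshift S τ) = (darts S).image (shiftDart τ) := by
  ext ⟨u, w⟩
  simp only [mem_darts, Finset.mem_image]
  constructor
  · rintro ⟨h1, h2, h3⟩
    refine ⟨((u.1, u.2 - τ), (w.1, w.2 - τ)), ⟨mem_OOCshift' h1, mem_OOCshift' h2, ?_⟩, ?_⟩
    · intro hc
      simp only [Prod.mk.injEq] at hc
      exact h3 (Prod.ext hc.1 (by have := hc.2; rwa [sub_left_inj] at this))
    · unfold shiftDart shiftPt
      dsimp only
      rw [sub_add_cancel, sub_add_cancel]
  · rintro ⟨⟨a, b⟩, ⟨h1, h2, h3⟩, hab⟩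
    unfold shiftDart shiftPt at hab
    simp only [Prod.mk.injEq] at hab
    obtain ⟨hu, hw⟩ := hab
    subst hu
    subst hw
    refine ⟨?_, ?_, ?_⟩
    · rw [mem_OOCshift]; dsimp only; simpa using h1
    · rw [mem_OOCshift]; dsimp only; simpa using h2
    · intro hc
      simp only [Prod.mk.injEq] at hc
      exact h3 (Prod.ext hc.1 (by have := hc.2; rwa [add_left_inj] at this))

end OOC3
namespace OOC3

variable {m : ℕ}

lemma OOCshift_comp (S : Finset (Pt m)) (σ τ : ZMod 4) :
    OOCshift (OOCshift S σ) τ = OOCshift S (σ + τ) := by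
  ext u
  rw [mem_OOCshift, mem_OOCshift, mem_OOCshift]
  dsimp only
  rw [show u.2 - τ - σ = u.2 - (σ + τ) from by ring]

lemma mem_D_iff {p : Pt m × Pt m} : p ∈ D m ↔ good p := by
  simp [D]

lemma D_shift_mem (τ : ZMod 4) {p : Pt m × Pt m} : shiftDart τ p ∈ D m ↔ p ∈ D m := by
  rw [mem_D_iff, mem_D_iff]; exact good_shift

lemma D_swap_mem {p : Pt m × Pt m} (h : p ∈ D m) : dswap p ∈ D m := by
  rw [mem_D_iff] at h ⊢; exact good_swap h

lemma darts_swap {S : Finset (Pt m)} {p : Pt m × Pt m} (h : p ∈ darts S) :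
    dswap p ∈ darts S := by
  rw [mem_darts] at h ⊢
  exact ⟨h.2.1, h.1, fun hc => h.2.2 hc.symm⟩

lemma cov_shift_mem' {C : Finset (Finset (Pt m))} (τ : ZMod 4) {p : Pt m × Pt m}
    (h : p ∈ cov C) : shiftDart τ p ∈ cov C := by
  rw [mem_cov] at h ⊢
  obtain ⟨A, hA, σ, hp⟩ := h
  refine ⟨A, hA, σ + τ, ?_⟩
  rw [← OOCshift_comp, darts_shift_eq]
  exact Finset.mem_image_of_mem _ hp

lemma cov_shift_mem {C : Finset (Finset (Pt m))} (τ : ZMod 4) {p : Pt m × Pt m} :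
    shiftDart τ p ∈ cov C ↔ p ∈ cov C := by
  constructor
  · intro h
    have := cov_shift_mem' (-τ) h
    rwa [shiftDart_comp, add_neg_cancel, shiftDart_zero] at this
  · exact cov_shift_mem' τ

lemma cov_swap_mem {C : Finset (Finset (Pt m))} {p : Pt m × Pt m}
    (h : p ∈ cov C) : dswap p ∈ cov C := by
  rw [mem_cov] at h ⊢
  obtain ⟨A, hA, σ, hp⟩ := h
  exact ⟨A, hA, σ, darts_swap hp⟩

def leave (C : Finset (Finset (Pt m))) : Finset (Pt m × Pt m) := D m \ cov C

lemma leave_shift_mem {C : Finset (Finset (Pt m))} (τ : ZMod 4) {p : Pt m × Pt m}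
    (h : p ∈ leave C) : shiftDart τ p ∈ leave C := by
  rw [leave, Finset.mem_sdiff] at h ⊢
  exact ⟨(D_shift_mem τ).2 h.1, fun hc => h.2 ((cov_shift_mem τ).1 hc)⟩

lemma leave_swap_mem {C : Finset (Finset (Pt m))} {p : Pt m × Pt m}
    (h : p ∈ leave C) : dswap p ∈ leave C := by
  rw [leave, Finset.mem_sdiff] at h ⊢
  refine ⟨D_swap_mem h.1, fun hc => h.2 ?_⟩
  have := cov_swap_mem hc
  simpa [dswap] using this

def degAt (T : Finset (Pt m × Pt m)) (v : Pt m) : ℕ := (T.filter fun p => p.1 = v).card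

lemma degAt_D (v : Pt m) : degAt (D m) v + 2 = 4 * m := by
  classical
  have himg : (D m).filter (fun p => p.1 = v)
      = (Finset.univ.filter fun w => good (v, w)).image (fun w => (v, w)) := by
    ext ⟨a, b⟩
    simp only [D, Finset.mem_filter, Finset.mem_univ, true_and, Finset.mem_image,
      Prod.mk.injEq]
    constructor
    · rintro ⟨hg, rfl⟩
      exact ⟨b, hg, rfl, rfl⟩
    · rintro ⟨w, hw, rfl, rfl⟩
      exact ⟨hw, rfl⟩
  have hinj : Function.Injective (fun w : Pt m => (v, w)) := by
    intro a b hab; simpa using hab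
  have hcompl : Finset.univ.filter (fun w => ¬ good (v, w)) = {v, (v.1, v.2 + 2)} := by
    ext w
    simp only [Finset.mem_filter, Finset.mem_univ, true_and, Finset.mem_insert,
      Finset.mem_singleton]
    rw [not_good_iff]
  have hc2 : (Finset.univ.filter (fun w => ¬ good (v, w))).card = 2 := by
    rw [hcompl]
    rw [Finset.card_insert_of_notMem, Finset.card_singleton]
    simp only [Finset.mem_singleton]
    intro hcon
    exact ne_self_add_two v.2 (congrArg Prod.snd hcon)
  have hsplit := Finset.card_filter_add_card_filter_not
    (s := (Finset.univ : Finset (Pt m))) (p := fun w => good (v, w))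
  rw [hc2, Finset.card_univ, card_Pt] at hsplit
  unfold degAt
  rw [himg, Finset.card_image_of_injective _ hinj]
  exact hsplit

lemma degAt_darts {S : Finset (Pt m)} (v : Pt m) :
    degAt (darts S) v = if v ∈ S then S.card - 1 else 0 := by
  classical
  by_cases hv : v ∈ S
  · rw [if_pos hv]
    have himg : (darts S).filter (fun p => p.1 = v)
        = (S.erase v).image (fun w => (v, w)) := by
      ext ⟨a, b⟩
      simp only [mem_darts, Finset.mem_filter, Finset.mem_image, Finset.mem_erase,
        Prod.mk.injEq]
      constructor
      · rintro ⟨⟨h1, h2, h3⟩, rfl⟩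
        exact ⟨b, ⟨fun hc => h3 hc.symm, h2⟩, rfl, rfl⟩
      · rintro ⟨w, ⟨hw1, hw2⟩, rfl, rfl⟩
        exact ⟨⟨hv, hw2, fun hc => hw1 hc.symm⟩, rfl⟩
    unfold degAt
    rw [himg, Finset.card_image_of_injective _ (fun a b hab => by simpa using hab),
      Finset.card_erase_of_mem hv]
  · rw [if_neg hv]
    unfold degAt
    rw [Finset.card_eq_zero, Finset.filter_eq_empty_iff]
    rintro p hp rfl
    exact hv (mem_darts.1 hp).1

lemma degAt_cov_even {C : Finset (Finset (Pt m))} (hOOC : IsOOC m 4 3 1 C) (v : Pt m) :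
    2 ∣ degAt (cov C) v := by
  classical
  unfold degAt cov
  rw [Finset.filter_biUnion]
  rw [Finset.card_biUnion]
  · apply Finset.dvd_sum
    intro q hq
    rw [Finset.mem_product] at hq
    have h3 : (OOCshift q.1 q.2).card = 3 := by
      rw [OOCshift_eq_image, Finset.card_image_of_injective _ (shiftPt_inj q.2)]
      exact hOOC.1 q.1 hq.1
    have := degAt_darts (S := OOCshift q.1 q.2) v
    unfold degAt at this
    rw [this, h3]
    split <;> norm_num
  · rintro ⟨A, τ⟩ hq ⟨B, σ⟩ hq' hne
    rw [Finset.mem_coe, Finset.mem_product] at hq hq'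
    exact Finset.disjoint_filter_filter (darts_shift_disjoint hOOC hq.1 hq'.1 hne)

lemma degAt_leave_even {C : Finset (Finset (Pt m))} (hOOC : IsOOC m 4 3 1 C) (v : Pt m) :
    2 ∣ degAt (leave C) v := by
  classical
  have hunion : cov C ∪ leave C = D m := Finset.union_sdiff_of_subset (cov_subset_D hOOC)
  have hdisj : Disjoint (cov C) (leave C) := Finset.disjoint_sdiff
  have hsum : degAt (cov C) v + degAt (leave C) v = degAt (D m) v := by
    unfold degAt
    rw [← hunion, Finset.filter_union,
      Finset.card_union_of_disjoint (Finset.disjoint_filter_filter hdisj)]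
  have h1 := degAt_D (m := m) v
  have h2 := degAt_cov_even hOOC v
  omega

end OOC3
namespace OOC3

variable {m : ℕ}

def oddIn (S : Finset (Pt m)) : ℕ := ((S ×ˢ S).filter oddp).card

lemma oddp_ne {p : Pt m × Pt m} (h : oddp p) : p.1 ≠ p.2 := by
  intro hc
  unfold oddp at h
  rw [hc, sub_self] at h
  simp [ZMod.val_zero] at h

lemma darts_inter_oddD (S : Finset (Pt m)) :
    darts S ∩ oddD m = (S ×ˢ S).filter oddp := by
  ext p
  simp only [Finset.mem_inter, mem_darts, oddD, Finset.mem_filter, Finset.mem_univ,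
    true_and, Finset.mem_product]
  constructor
  · rintro ⟨⟨h1, h2, -⟩, h4⟩
    exact ⟨⟨h1, h2⟩, h4⟩
  · rintro ⟨⟨h1, h2⟩, h3⟩
    exact ⟨⟨h1, h2, oddp_ne h3⟩, h3⟩

lemma prod_shift (S : Finset (Pt m)) (τ : ZMod 4) :
    (OOCshift S τ) ×ˢ (OOCshift S τ) = (S ×ˢ S).image (shiftDart τ) := by
  ext ⟨u, w⟩
  simp only [Finset.mem_product, Finset.mem_image]
  constructor
  · rintro ⟨h1, h2⟩
    refine ⟨((u.1, u.2 - τ), (w.1, w.2 - τ)), ⟨mem_OOCshift' h1, mem_OOCshift' h2⟩, ?_⟩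
    unfold shiftDart shiftPt
    dsimp only
    rw [sub_add_cancel, sub_add_cancel]
  · rintro ⟨⟨a, b⟩, ⟨h1, h2⟩, hab⟩
    unfold shiftDart shiftPt at hab
    simp only [Prod.mk.injEq] at hab
    obtain ⟨hu, hw⟩ := hab
    subst hu
    subst hw
    constructor
    · rw [mem_OOCshift]; dsimp only; simpa using h1
    · rw [mem_OOCshift]; dsimp only; simpa using h2

lemma oddIn_shift (S : Finset (Pt m)) (τ : ZMod 4) :
    oddIn (OOCshift S τ) = oddIn S := by
  classical
  unfold oddIn
  rw [prod_shift, Finset.filter_image]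
  rw [Finset.card_image_of_injective _ (shiftDart_inj τ)]
  congr 1
  apply Finset.filter_congr
  intro p hp
  simp only [oddp_shift]

lemma four_dvd_oddIn {S : Finset (Pt m)} (hS : S.card = 3) : 4 ∣ oddIn S := by
  classical
  set P : Pt m → Prop := fun v => v.2.val % 2 = 1 with hP
  have hsplit : (S ×ˢ S).filter oddp
      = ((S.filter P) ×ˢ (S.filter fun v => ¬ P v))
        ∪ ((S.filter fun v => ¬ P v) ×ˢ (S.filter P)) := by
    ext ⟨u, w⟩
    simp only [Finset.mem_filter, Finset.mem_product, Finset.mem_union]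
    have hkey : ∀ a b : ZMod 4, ((b - a).val % 2 = 1)
        ↔ ((a.val % 2 = 1 ∧ ¬ b.val % 2 = 1) ∨ (¬ a.val % 2 = 1 ∧ b.val % 2 = 1)) := by
      decide
    have : oddp (u, w) ↔ (P u ∧ ¬ P w) ∨ (¬ P u ∧ P w) := hkey u.2 w.2
    rw [this]
    tauto
  have hdisj : Disjoint ((S.filter P) ×ˢ (S.filter fun v => ¬ P v))
      ((S.filter fun v => ¬ P v) ×ˢ (S.filter P)) := by
    rw [Finset.disjoint_left]
    rintro ⟨u, w⟩ h1 h2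
    rw [Finset.mem_product] at h1 h2
    exact (Finset.mem_filter.1 h2.1).2 (Finset.mem_filter.1 h1.1).2
  have hkl := Finset.card_filter_add_card_filter_not (s := S) (p := P)
  rw [hS] at hkl
  unfold oddIn
  rw [hsplit, Finset.card_union_of_disjoint hdisj, Finset.card_product, Finset.card_product]
  set k := (S.filter P).card
  set l := (S.filter fun v => ¬ P v).card
  have hk3 : k ≤ 3 := by omega
  interval_cases k <;> omega

end OOC3
open OOC3 in
theorem stmt_3 (m : ℕ) (hm : 0 < m) (h : m % 6 = 4) :
    ∀ C : Finset (Finset (Fin m × ZMod 4)), IsOOC m 4 3 1 C →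
      C.card ≤ m * (2 * m - 1) / 3 - 1 := by
  classical
  intro C hOOC
  by_contra hcon
  push_neg at hcon
  obtain ⟨t, rfl⟩ : ∃ t, m = 6 * t + 4 := ⟨m / 6, by omega⟩
  obtain ⟨u, hu⟩ : ∃ u, u = t * t := ⟨_, rfl⟩
  -- arithmetic facts
  have hJ : (6 * t + 4) * (2 * (6 * t + 4) - 1) / 3 = 24 * u + 30 * t + 9 := by
    have e0 : 2 * (6 * t + 4) - 1 = 12 * t + 7 := by omega
    have e1 : (6 * t + 4) * (12 * t + 7) = 3 * (24 * u + 30 * t + 9) + 1 := by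
      rw [hu]; ring
    rw [e0, e1]
    omega
  rw [hJ] at hcon
  have hDcard : (D (6 * t + 4)).card = 576 * u + 720 * t + 224 := by
    have h1 := card_D_add (m := 6 * t + 4)
    have h2 : 16 * (6 * t + 4) ^ 2 = 576 * u + 768 * t + 256 := by rw [hu]; ring
    omega
  have hoddDcard : (oddD (6 * t + 4)).card = 288 * u + 384 * t + 128 := by
    have h1 := card_oddD (m := 6 * t + 4)
    have h2 : 8 * (6 * t + 4) ^ 2 = 288 * u + 384 * t + 128 := by rw [hu]; ring
    omega
  -- |C| = J
  have hcovD : (cov C).card ≤ (D (6 * t + 4)).card :=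
    Finset.card_le_card (cov_subset_D hOOC)
  rw [card_cov hOOC] at hcovD
  have hCcard : C.card = 24 * u + 30 * t + 9 := by omega
  -- |leave| = 8
  have hLcard : (leave C).card = 8 := by
    rw [leave, Finset.card_sdiff_of_subset (cov_subset_D hOOC), card_cov hOOC, hCcard, hDcard]
    omega
  -- every dart of the leave is within a single row
  have hpure : ∀ p ∈ leave C, p.1.1 = p.2.1 := by
    by_contra hmixed
    push_neg at hmixed
    obtain ⟨p, hp, hmix⟩ := hmixed
    set T : Finset (Pt (6 * t + 4) × Pt (6 * t + 4)) :=
      (Finset.univ.image fun k : ZMod 4 => shiftDart k p)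
        ∪ (Finset.univ.image fun k : ZMod 4 => shiftDart k (dswap p)) with hT
    have hTsub : T ⊆ leave C := by
      rw [hT]
      apply Finset.union_subset
      · intro q hq
        obtain ⟨k, -, rfl⟩ := Finset.mem_image.1 hq
        exact leave_shift_mem k hp
      · intro q hq
        obtain ⟨k, -, rfl⟩ := Finset.mem_image.1 hq
        exact leave_shift_mem k (leave_swap_mem hp)
    have hinj1 : Function.Injective (fun k : ZMod 4 => shiftDart k p) := by
      intro a b hab
      have h5 := congrArg (fun q => q.1.2) hab
      dsimp [shiftDart, shiftPt] at h5
      exact add_left_cancel h5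
    have hinj2 : Function.Injective (fun k : ZMod 4 => shiftDart k (dswap p)) := by
      intro a b hab
      have h5 := congrArg (fun q => q.1.2) hab
      dsimp [shiftDart, shiftPt] at h5
      exact add_left_cancel h5
    have hdisjT : Disjoint (Finset.univ.image fun k : ZMod 4 => shiftDart k p)
        (Finset.univ.image fun k : ZMod 4 => shiftDart k (dswap p)) := by
      rw [Finset.disjoint_left]
      rintro q hq1 hq2
      obtain ⟨k, -, rfl⟩ := Finset.mem_image.1 hq1
      obtain ⟨k', -, he⟩ := Finset.mem_image.1 hq2
      apply hmix
      have := congrArg (fun q => q.1.1) he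
      dsimp [shiftDart, shiftPt, dswap] at this
      exact this.symm
    have hTcard : T.card = 8 := by
      rw [hT, Finset.card_union_of_disjoint hdisjT,
        Finset.card_image_of_injective _ hinj1, Finset.card_image_of_injective _ hinj2,
        Finset.card_univ, ZMod.card]
    have hTL : T = leave C := Finset.eq_of_subset_of_card_le hTsub (by omega)
    have hdeg1 : degAt (leave C) p.1 = 1 := by
      have hfilter : (leave C).filter (fun q => q.1 = p.1) = {p} := by
        rw [← hTL, hT]
        ext q
        simp only [Finset.mem_filter, Finset.mem_union, Finset.mem_image, Finset.mem_univ,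
          true_and, Finset.mem_singleton]
        constructor
        · rintro ⟨(⟨k, rfl⟩ | ⟨k, rfl⟩), hq1⟩
          · have hk : k = 0 := by
              have := congrArg Prod.snd hq1
              dsimp [shiftDart, shiftPt] at this
              have h0 : p.1.2 + k = p.1.2 + 0 := by rwa [add_zero]
              exact add_left_cancel h0
            rw [hk, shiftDart_zero]
          · exfalso
            apply hmix
            have := congrArg Prod.fst hq1
            dsimp [shiftDart, shiftPt, dswap] at this
            exact this.symm
        · intro hq
          exact ⟨Or.inl ⟨0, by rw [hq]; exact shiftDart_zero _⟩, by rw [hq]⟩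
      unfold degAt
      rw [hfilter, Finset.card_singleton]
    have := degAt_leave_even hOOC p.1
    omega
  -- hence the leave consists of odd darts
  have hLodd : leave C ⊆ oddD (6 * t + 4) := by
    intro p hp
    have hD : p ∈ D (6 * t + 4) := (Finset.mem_sdiff.1 hp).1
    rw [mem_D_iff] at hD
    obtain ⟨h1, h2⟩ := hD
    have hrow := hpure p hp
    have hd0 : p.2.2 - p.1.2 ≠ 0 := by
      intro hc
      apply h1
      refine Prod.ext hrow ?_
      rw [sub_eq_zero] at hc
      exact hc.symm
    have hd2 : p.2.2 - p.1.2 ≠ 2 := fun hc => h2 ⟨hrow, hc⟩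
    have hkey : ∀ d : ZMod 4, d ≠ 0 → d ≠ 2 → d.val % 2 = 1 := by decide
    rw [oddD, Finset.mem_filter]
    exact ⟨Finset.mem_univ _, hkey _ hd0 hd2⟩
  -- decompose the odd darts
  have hsdiff : oddD (6 * t + 4) \ cov C = leave C := by
    apply Finset.Subset.antisymm
    · intro p hp
      rw [Finset.mem_sdiff] at hp
      rw [leave, Finset.mem_sdiff]
      refine ⟨?_, hp.2⟩
      have h1 := hp.1
      rw [oddD, Finset.mem_filter] at h1
      rw [mem_D_iff]
      exact oddp_good h1.2
    · intro p hp
      rw [Finset.mem_sdiff]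
      exact ⟨hLodd hp, (Finset.mem_sdiff.1 hp).2⟩
  have hsplit := Finset.card_inter_add_card_sdiff (oddD (6 * t + 4)) (cov C)
  rw [hsdiff, hLcard, hoddDcard] at hsplit
  -- the intersection with the covered part is divisible by 16
  have hIC : 16 ∣ (oddD (6 * t + 4) ∩ cov C).card := by
    have hbi : oddD (6 * t + 4) ∩ cov C
        = (C ×ˢ (Finset.univ : Finset (ZMod 4))).biUnion
            fun q => darts (OOCshift q.1 q.2) ∩ oddD (6 * t + 4) := by
      ext p
      constructor
      · intro hp
        rw [Finset.mem_inter] at hp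
        obtain ⟨h1, h2⟩ := hp
        rw [cov, Finset.mem_biUnion] at h2
        obtain ⟨q, hq, hpq⟩ := h2
        rw [Finset.mem_biUnion]
        exact ⟨q, hq, Finset.mem_inter.2 ⟨hpq, h1⟩⟩
      · intro hp
        rw [Finset.mem_biUnion] at hp
        obtain ⟨q, hq, hpq⟩ := hp
        rw [Finset.mem_inter] at hpq
        rw [Finset.mem_inter]
        exact ⟨hpq.2, by rw [cov, Finset.mem_biUnion]; exact ⟨q, hq, hpq.1⟩⟩
    rw [hbi, Finset.card_biUnion]
    · rw [Finset.sum_product]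
      apply Finset.dvd_sum
      intro A hA
      have hconst : ∀ τ ∈ (Finset.univ : Finset (ZMod 4)),
          (darts (OOCshift A τ) ∩ oddD (6 * t + 4)).card = oddIn A := by
        intro τ _
        rw [darts_inter_oddD]
        exact oddIn_shift A τ
      rw [Finset.sum_congr rfl hconst, Finset.sum_const, Finset.card_univ, ZMod.card,
        smul_eq_mul]
      obtain ⟨c, hc⟩ := four_dvd_oddIn (hOOC.1 A hA)
      exact ⟨c, by rw [hc]; ring⟩
    · rintro ⟨A, τ⟩ hq ⟨B, σ⟩ hq' hne
      rw [Finset.mem_coe, Finset.mem_product] at hq hq'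
      exact Finset.disjoint_of_subset_left Finset.inter_subset_left
        (Finset.disjoint_of_subset_right Finset.inter_subset_left
          (darts_shift_disjoint hOOC hq.1 hq'.1 hne))
  omega
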